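/- Every CN-algebra A is isomorphic to a CN-twist algebra over ◇(A) via the map ι(a) := (◇a, ◇¬a); in particular ι additionally preserves the implication: ι(a → b) = ι(a) → ι(b), where on pairs (x₁,y₁) → (x₂,y₂) := (x₁ → x₂, x₁ → y₂). -/

import Mathlib

/-- A CN-algebra: a centered Kleene lattice (distributive lattice with involutive
De Morgan negation satisfying the Kleene inequality and a center `½`) together
with an implication satisfying (CN1)–(CN5), where `◇x := x ⊓ ½`. -/
class CNAlgebra (A : Type*) extends DistribLattice A where
  neg : A → A
  half : A
  imp : A → A → A
  neg_neg : ∀ a : A, neg (neg a) = a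
  neg_inf : ∀ a b : A, neg (a ⊓ b) = neg a ⊔ neg b
  kleene : ∀ a b : A, neg a ⊓ a ≤ neg b ⊔ b
  neg_half : neg half = half
  cn1 : ∀ x y z : A, imp (x ⊓ y) z = imp x (imp y z)
  cn2 : ∀ x y : A, half ≤ imp x (imp y y)
  cn3 : ∀ x y : A, half ≤ imp (imp (imp x y) x) x
  cn4 : ∀ x y : A, imp x y ⊓ half = imp (x ⊓ half) (y ⊓ half)
  cn5 : ∀ x y : A, neg (imp x y) = imp x (neg y)

open CNAlgebra

/-- CN-twist representation: every CN-algebra `A` is isomorphic to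
a CN-twist algebra over `◇(A)` via `ι(a) := (◇a, ◇¬a)`: `ι` lands in the twist
universe (pairs joining to `½`), is injective, preserves `⊓`, `¬`, `½`, and in
particular the implication: `ι(a → b) = ι(a) → ι(b)` where, on pairs,
`(x₁,y₁) → (x₂,y₂) := (x₁ → x₂, x₁ → y₂)`. -/
theorem cn_twist_representation {A : Type*} [CNAlgebra A] :
    let ι : A → A × A := fun a => (a ⊓ half, neg a ⊓ half)
    (∀ a : A, (ι a).1 ⊔ (ι a).2 = half) ∧
    Function.Injective ι ∧
    (∀ a b : A, ι (a ⊓ b) = ((ι a).1 ⊓ (ι b).1, (ι a).2 ⊔ (ι b).2)) ∧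
    (∀ a : A, ι (neg a) = ((ι a).2, (ι a).1)) ∧
    ι half = (half, half) ∧
    (∀ a b : A, ι (imp a b) = (imp ((ι a).1) ((ι b).1), imp ((ι a).1) ((ι b).2))) ∧
    Prod.fst '' Set.range ι = Set.range (fun x : A => x ⊓ half) := by
  intro ι
  refine ⟨?_, ?_, ?_, ?_, ?_, ?_, ?_⟩
  · intro a
    have hk : half ≤ neg a ⊔ a := by
      have := kleene (half : A) a
      rwa [neg_half, inf_idem] at this
    show (a ⊓ half) ⊔ (neg a ⊓ half) = half
    rw [← inf_sup_right]
    exact inf_eq_right.mpr (le_trans hk (by rw [sup_comm]))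
  · intro a b h
    have h1 : a ⊓ half = b ⊓ half := congrArg Prod.fst h
    have h2 : neg a ⊓ half = neg b ⊓ half := congrArg Prod.snd h
    have h3 : a ⊔ half = b ⊔ half := by
      have := congrArg neg h2
      rwa [CNAlgebra.neg_inf, CNAlgebra.neg_inf, CNAlgebra.neg_neg, CNAlgebra.neg_neg, neg_half] at this
    exact eq_of_inf_eq_sup_eq h1 h3
  · intro a b
    show ((a ⊓ b) ⊓ half, neg (a ⊓ b) ⊓ half) = _
    rw [CNAlgebra.neg_inf, inf_sup_right]
    exact Prod.ext (by show (a ⊓ b) ⊓ half = (a ⊓ half) ⊓ (b ⊓ half); rw [inf_inf_distrib_right]) rfl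
  · intro a
    show (neg a ⊓ half, neg (neg a) ⊓ half) = _
    rw [CNAlgebra.neg_neg]
  · show (half ⊓ half, neg half ⊓ half) = _
    rw [neg_half, inf_idem]
  · intro a b
    show (imp a b ⊓ half, neg (imp a b) ⊓ half) = _
    rw [cn4, cn5, cn4]
  · ext x
    simp only [Set.mem_image, Set.mem_range]
    constructor
    · rintro ⟨p, ⟨a, rfl⟩, rfl⟩; exact ⟨a, rfl⟩
    · rintro ⟨a, rfl⟩; exact ⟨ι a, ⟨a, rfl⟩, rfl⟩
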